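/- arXiv:0908.4575 — 3 statements merged into one kernel-verified Lean document; each statement's English description precedes it below -/
import Mathlib

section
/- For a measure-preserving ergodic transformation F of a probability space (Ω,μ) and a measurable set S with μ(S)>0, Kac's lemma holds: the integral over S of the first return time τ_S(x) with respect to μ equals 1, equivalently the μ-conditional expectation of τ_S on S equals 1/μ(S). -/
open MeasureTheory ENNReal

theorem kac_lemma {Ω : Type*} [MeasurableSpace Ω] (μ : Measure Ω)
    [IsProbabilityMeasure μ] (F : Ω → Ω) (hErg : Ergodic F μ)
    (S : Set Ω) (hS : MeasurableSet S) (hpos : 0 < μ S) :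
    ∫⁻ x in S, ((sInf {n : ℕ | 1 ≤ n ∧ F^[n] x ∈ S} : ℕ) : ℝ≥0∞) ∂μ = 1 := by
  have hF : Measurable F := hErg.measurable
  set R : Ω → ℕ := fun x => sInf {n : ℕ | 1 ≤ n ∧ F^[n] x ∈ S} with hR
  -- E n : no visit to S at times 1..n
  set E : ℕ → Set Ω := fun n => {x | ∀ k, 1 ≤ k → k ≤ n → F^[k] x ∉ S} with hE
  have hEmeas : ∀ n, MeasurableSet (E n) := by
    intro n
    have : E n = ⋂ k ∈ Set.Icc 1 n, F^[k] ⁻¹' Sᶜ := by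
      ext x; simp [hE, Set.mem_Icc]
    rw [this]
    exact MeasurableSet.biInter (Set.to_countable _)
      (fun k _ => (hF.iterate k) hS.compl)
  have hEanti : Antitone E := by
    intro m n hmn x hx k hk1 hk2
    exact hx k hk1 (hk2.trans hmn)
  -- the set of points that never return
  set Einf : Set Ω := ⋂ n, E n with hEinf
  have hEinfmeas : MeasurableSet Einf := MeasurableSet.iInter hEmeas
  have hEinf_mem : ∀ x, x ∈ Einf ↔ ∀ k, 1 ≤ k → F^[k] x ∉ S := by
    intro x
    constructor
    · intro hx k hk
      exact (Set.mem_iInter.1 hx k) k hk le_rfl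
    · intro hx
      exact Set.mem_iInter.2 fun n k hk1 _ => hx k hk1
  -- Einf has measure zero
  have hEinf0 : μ Einf = 0 := by
    have hsub : Einf ⊆ F ⁻¹' Einf := by
      intro x hx
      rw [Set.mem_preimage, hEinf_mem]
      intro k hk
      rw [← Function.iterate_succ_apply]
      exact (hEinf_mem x).1 hx (k + 1) (Nat.le_add_left 1 k)
    rcases hErg.ae_empty_or_univ_of_ae_le_preimage hEinfmeas.nullMeasurableSet
        hsub.eventuallyLE with h | h
    · exact (measure_congr h).trans measure_empty
    · exfalso
      have h1 : μ (F ⁻¹' S) = μ S := hErg.measure_preimage hS.nullMeasurableSet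
      have h2 : F ⁻¹' S ⊆ Einfᶜ := by
        intro x hx hx'
        exact (hEinf_mem x).1 hx' 1 le_rfl (by simpa using hx)
      have h3 : μ Einfᶜ = 0 := by
        have := measure_congr h
        simp only [measure_univ] at this
        have : μ Einfᶜ = 1 - μ Einf := by
          rw [measure_compl hEinfmeas (measure_ne_top μ _), this, measure_univ]
        rw [this]
        have : μ Einf = 1 := by
          have := measure_congr h; simpa using this
        simp [this]
      exact absurd (measure_mono_null h2 h3) (by rw [h1]; exact hpos.ne')
  -- recursion : μ (E n) = μ (S ∩ E n) + μ (E (n+1))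
  have hrec : ∀ n, μ (E n) = μ (E n ∩ S) + μ (E (n + 1)) := by
    intro n
    have hstep : E (n + 1) = F ⁻¹' (E n \ S) := by
      ext x
      simp only [Set.mem_preimage, Set.mem_diff, hE, Set.mem_setOf_eq]
      constructor
      · intro hx
        refine ⟨fun k hk1 hk2 => ?_, ?_⟩
        · rw [← Function.iterate_succ_apply]
          exact hx (k + 1) (Nat.le_add_left 1 k) (by omega)
        · simpa using hx 1 le_rfl (by omega)
      · rintro ⟨h1, h2⟩ k hk1 hk2
        rcases Nat.exists_eq_add_of_le hk1 with ⟨m, rfl⟩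
        rcases Nat.eq_zero_or_pos m with rfl | hm
        · simpa using h2
        · rw [Nat.add_comm, Function.iterate_succ_apply]
          exact h1 m hm (by omega)
    have := measure_inter_add_diff (μ := μ) (E n) hS
    rw [← this, hstep, hErg.measure_preimage ((hEmeas n).diff hS).nullMeasurableSet]
  -- partial sums
  have hpartial : ∀ N, (∑ k ∈ Finset.range N, μ (E k ∩ S)) + μ (E N) = 1 := by
    intro N
    induction N with
    | zero =>
      simp only [Finset.range_zero, Finset.sum_empty, zero_add]
      have : E 0 = Set.univ := by
        ext x; simp [hE]; intro k h1 h2; omega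
      rw [this, measure_univ]
    | succ N ih =>
      rw [Finset.sum_range_succ, add_assoc, ← hrec N, ih]
  -- sum of the series
  have htsum : ∑' n, μ (E n ∩ S) = 1 := by
    have hlim1 : Filter.Tendsto (fun N => ∑ k ∈ Finset.range N, μ (E k ∩ S))
        Filter.atTop (nhds (∑' n, μ (E n ∩ S))) := ENNReal.tendsto_nat_tsum _
    have hlim2 : Filter.Tendsto (fun N => μ (E N)) Filter.atTop (nhds (μ Einf)) :=
      tendsto_measure_iInter_atTop (fun n => (hEmeas n).nullMeasurableSet) hEanti
        ⟨0, measure_ne_top μ _⟩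
    rw [hEinf0] at hlim2
    have hlim3 : Filter.Tendsto
        (fun N => (∑ k ∈ Finset.range N, μ (E k ∩ S)) + μ (E N))
        Filter.atTop (nhds (∑' n, μ (E n ∩ S) + 0)) :=
      Filter.Tendsto.add hlim1 hlim2
    simp only [add_zero] at hlim3
    have : Filter.Tendsto (fun _ : ℕ => (1 : ℝ≥0∞)) Filter.atTop (nhds 1) :=
      tendsto_const_nhds
    have heq : (fun N => (∑ k ∈ Finset.range N, μ (E k ∩ S)) + μ (E N)) =
        fun _ : ℕ => (1 : ℝ≥0∞) := funext hpartial
    rw [heq] at hlim3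
    exact tendsto_nhds_unique hlim3 this
  -- layer cake: pointwise identity
  have hpoint : ∀ x, ((R x : ℕ) : ℝ≥0∞) =
      ∑' n : ℕ, (E n \ Einf).indicator (fun _ => (1 : ℝ≥0∞)) x := by
    intro x
    by_cases hx : x ∈ Einf
    · have hRx : R x = 0 := by
        show sInf {n : ℕ | 1 ≤ n ∧ F^[n] x ∈ S} = 0
        have : {n : ℕ | 1 ≤ n ∧ F^[n] x ∈ S} = ∅ := by
          ext k; simp only [Set.mem_setOf_eq, Set.mem_empty_iff_false, iff_false]
          rintro ⟨h1, h2⟩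
          exact (hEinf_mem x).1 hx k h1 h2
        rw [this, Nat.sInf_empty]
      have : ∀ n, (E n \ Einf).indicator (fun _ => (1 : ℝ≥0∞)) x = 0 := by
        intro n
        apply Set.indicator_of_notMem
        rintro ⟨-, h⟩; exact h hx
      simp [hRx, this]
    · -- the return set is nonempty
      have hne : {n : ℕ | 1 ≤ n ∧ F^[n] x ∈ S}.Nonempty := by
        by_contra h
        rw [Set.not_nonempty_iff_eq_empty] at h
        apply hx
        rw [hEinf_mem]
        intro k hk hkS
        have hmem : k ∈ {n : ℕ | 1 ≤ n ∧ F^[n] x ∈ S} := ⟨hk, hkS⟩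
        rw [h] at hmem
        exact hmem
      have hiff : ∀ n, x ∈ E n ↔ n < R x := by
        intro n
        constructor
        · intro hxE
          have hmem := Nat.sInf_mem hne
          simp only [Set.mem_setOf_eq] at hmem
          by_contra hlt
          push_neg at hlt
          exact hxE (R x) hmem.1 hlt hmem.2
        · intro hlt k hk1 hk2 hkS
          have hle : R x ≤ k :=
            Nat.sInf_le (show k ∈ {n : ℕ | 1 ≤ n ∧ F^[n] x ∈ S} from ⟨hk1, hkS⟩)
          omega
      have hind : ∀ n, (E n \ Einf).indicator (fun _ => (1 : ℝ≥0∞)) x =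
          if n < R x then 1 else 0 := by
        intro n
        by_cases h : n < R x
        · rw [if_pos h]
          exact Set.indicator_of_mem (show x ∈ E n \ Einf from ⟨(hiff n).2 h, hx⟩) _
        · rw [if_neg h]
          apply Set.indicator_of_notMem
          rintro ⟨hxE, -⟩
          exact h ((hiff n).1 hxE)
      simp only [hind]
      rw [tsum_eq_sum (s := Finset.range (R x))
        (fun b hb => if_neg (by simpa using hb))]
      rw [Finset.sum_ite_of_true (fun b hb => Finset.mem_range.1 hb)]
      simp
  calc ∫⁻ x in S, ((R x : ℕ) : ℝ≥0∞) ∂μ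
      = ∫⁻ x in S, ∑' n : ℕ, (E n \ Einf).indicator (fun _ => (1 : ℝ≥0∞)) x ∂μ := by
        exact lintegral_congr fun x => hpoint x
    _ = ∑' n : ℕ, ∫⁻ x in S, (E n \ Einf).indicator (fun _ => (1 : ℝ≥0∞)) x ∂μ := by
        exact lintegral_tsum fun n =>
          ((measurable_one.indicator ((hEmeas n).diff hEinfmeas)).aemeasurable)
    _ = ∑' n : ℕ, μ (E n ∩ S) := by
        refine tsum_congr fun n => ?_
        rw [lintegral_indicator ((hEmeas n).diff hEinfmeas), setLIntegral_one,
          Measure.restrict_apply ((hEmeas n).diff hEinfmeas)]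
        have hset : (E n \ Einf) ∩ S = (E n ∩ S) \ Einf := by
          ext x
          simp only [Set.mem_inter_iff, Set.mem_diff]
          tauto
        rw [hset]
        exact measure_diff_null hEinf0
    _ = 1 := htsum
end

section
/- For the tent map F, a point x∈[0,1] is periodic of period dividing n if and only if x = 2k/(2^n+1) or x = 2k/(2^n−1) for suitable integers k; in particular the set of periodic points of F is dense in [0,1]. -/
noncomputable def tent (x : ℝ) : ℝ := if x ≤ 1/2 then 2*x else 2-2*x

noncomputable def saw (t : ℝ) : ℝ := 1 - |2 * Int.fract (t/2) - 1|

lemma saw_eq_self {x : ℝ} (hx : x ∈ Set.Icc (0:ℝ) 1) : saw x = x := by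
  obtain ⟨h0, h1⟩ := hx
  have hf : Int.fract (x/2) = x/2 := Int.fract_eq_self.2 ⟨by linarith, by linarith⟩
  rw [saw, hf, abs_of_nonpos (by linarith)]
  ring

lemma saw_add_two_int (t : ℝ) (k : ℤ) : saw (t + 2*k) = saw t := by
  have h : (t + 2*(k:ℝ))/2 = t/2 + k := by ring
  rw [saw, h, Int.fract_add_intCast, saw]

lemma saw_neg (t : ℝ) : saw (-t) = saw t := by
  by_cases h : Int.fract (t/2) = 0
  · have h2 : Int.fract (-(t/2)) = 0 := Int.fract_neg_eq_zero.2 h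
    rw [saw, saw, show (-t)/2 = -(t/2) by ring, h2, h]
  · have h2 : Int.fract (-(t/2)) = 1 - Int.fract (t/2) := Int.fract_neg h
    rw [saw, saw, show (-t)/2 = -(t/2) by ring, h2]
    rw [show 2 * (1 - Int.fract (t/2)) - 1 = -(2 * Int.fract (t/2) - 1) by ring, abs_neg]

lemma tent_saw (t : ℝ) : tent (saw t) = saw (2*t) := by
  set u := Int.fract (t/2) with hu
  have hu0 : 0 ≤ u := Int.fract_nonneg _
  have hu1 : u < 1 := Int.fract_lt_one _
  have ht : t = 2*u + ((2*⌊t/2⌋ : ℤ) : ℝ) := by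
    have : u = t/2 - ⌊t/2⌋ := rfl
    push_cast
    linarith
  have hft : Int.fract t = Int.fract (2*u) := by
    conv_lhs => rw [ht]
    rw [Int.fract_add_intCast]
  have hsaw2t : saw (2*t) = 1 - |2 * Int.fract t - 1| := by
    rw [saw, show (2*t)/2 = t by ring]
  rcases lt_or_ge u (1/2) with hc | hc
  · have hf2 : Int.fract (2*u) = 2*u := Int.fract_eq_self.2 ⟨by linarith, by linarith⟩
    rw [hsaw2t, hft, hf2, saw, ← hu, tent, abs_of_nonpos (by linarith : 2*u - 1 ≤ 0)]
    rcases le_or_gt u (1/4) with hc2 | hc2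
    · rw [if_pos (by linarith), abs_of_nonpos (by linarith)]; ring
    · rw [if_neg (by linarith), abs_of_nonneg (by linarith)]; ring
  · have hf2 : Int.fract (2*u) = 2*u - 1 := by
      have : Int.fract (2*u - 1 + (1:ℤ)) = 2*u - 1 := by
        rw [Int.fract_add_intCast]
        exact Int.fract_eq_self.2 ⟨by linarith, by linarith⟩
      simpa using this
    rw [hsaw2t, hft, hf2, saw, ← hu, tent, abs_of_nonneg (by linarith : 0 ≤ 2*u - 1)]
    rcases lt_or_ge u (3/4) with hc2 | hc2
    · rw [if_neg (by linarith), abs_of_nonpos (by linarith)]; ring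
    · rw [if_pos (by linarith), abs_of_nonneg (by linarith)]; ring

lemma tent_iter (n : ℕ) {x : ℝ} (hx : x ∈ Set.Icc (0:ℝ) 1) :
    tent^[n] x = saw (2^n * x) := by
  induction n with
  | zero => simp [saw_eq_self hx]
  | succ n ih =>
      rw [Function.iterate_succ_apply', ih, tent_saw, show 2*(2^n*x) = 2^(n+1)*x by ring]

theorem tent_periodic_points_characterization :
    (∀ n : ℕ, 1 ≤ n → ∀ x ∈ Set.Icc (0:ℝ) 1,
      (tent^[n] x = x ↔
        ∃ k : ℤ, x = 2 * (k : ℝ) / (2^n + 1) ∨ x = 2 * (k : ℝ) / (2^n - 1))) ∧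
    Set.Icc (0:ℝ) 1 ⊆
      closure {x ∈ Set.Icc (0:ℝ) 1 | ∃ n : ℕ, 1 ≤ n ∧ tent^[n] x = x} := by
  have hchar : ∀ n : ℕ, 1 ≤ n → ∀ x ∈ Set.Icc (0:ℝ) 1,
      (tent^[n] x = x ↔
        ∃ k : ℤ, x = 2 * (k : ℝ) / (2^n + 1) ∨ x = 2 * (k : ℝ) / (2^n - 1)) := by
    intro n hn x hx
    have h2n : (2:ℝ) ≤ 2^n := by
      calc (2:ℝ) = 2^1 := by norm_num
      _ ≤ 2^n := pow_le_pow_right₀ (by norm_num) hn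
    have hp1 : (2:ℝ)^n + 1 ≠ 0 := by positivity
    have hm1 : (2:ℝ)^n - 1 ≠ 0 := by intro h; nlinarith
    constructor
    · intro h
      rw [tent_iter n hx] at h
      set u := Int.fract (2^n * x / 2) with hu
      set m := ⌊(2:ℝ)^n * x / 2⌋ with hm
      have hueq : u = 2^n * x / 2 - m := rfl
      have hkey : (2:ℝ)^n * x = 2*m + 2*u := by linarith [hueq]
      rw [saw, ← hu] at h
      rcases le_or_gt (2*u) 1 with hc | hc
      · rw [abs_of_nonpos (by linarith)] at h
        -- x = 2u, so 2^n x = 2m + x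
        refine ⟨m, Or.inr ?_⟩
        rw [eq_div_iff hm1]
        nlinarith
      · rw [abs_of_nonneg (by linarith)] at h
        -- x = 2 - 2u, so 2^n x = 2m + 2 - x
        refine ⟨m + 1, Or.inl ?_⟩
        rw [eq_div_iff hp1]
        push_cast
        nlinarith
    · rintro ⟨k, hk | hk⟩
      · have hxk : x * (2^n + 1) = 2*k := by rw [hk]; field_simp
        have h2 : (2:ℝ)^n * x = -x + 2*k := by nlinarith
        rw [tent_iter n hx, h2, saw_add_two_int, saw_neg, saw_eq_self hx]
      · have hxk : x * (2^n - 1) = 2*k := by rw [hk]; field_simp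
        have h2 : (2:ℝ)^n * x = x + 2*k := by nlinarith
        rw [tent_iter n hx, h2, saw_add_two_int, saw_eq_self hx]
  refine ⟨hchar, ?_⟩
  intro x hx
  obtain ⟨hx0, hx1⟩ := hx
  rw [Metric.mem_closure_iff]
  intro ε hε
  obtain ⟨n, hn⟩ := pow_unbounded_of_one_lt (2/ε) (by norm_num : (1:ℝ) < 2)
  set q : ℝ := 2^(n+1) - 1 with hq
  have h2n1 : (1:ℝ) ≤ 2^n := one_le_pow₀ (by norm_num : (1:ℝ) ≤ 2)
  have hqn : (2:ℝ)^n ≤ q := by rw [hq, pow_succ]; nlinarith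
  have hq0 : (0:ℝ) < q := by nlinarith
  have hqε : 2/q < ε := by
    rw [div_lt_iff₀ hq0]
    have h1 : 2/ε < q := lt_of_lt_of_le hn hqn
    rw [div_lt_iff₀ hε] at h1
    linarith
  set k : ℤ := ⌊x * q / 2⌋ with hk
  have hk0 : (0:ℤ) ≤ k := Int.floor_nonneg.2 (by positivity)
  have hkle : (k:ℝ) ≤ x * q / 2 := Int.floor_le _
  have hklt : x * q / 2 - 1 < k := Int.sub_one_lt_floor _
  set y : ℝ := 2*k/q with hy
  have hy0 : 0 ≤ y := by
    apply div_nonneg _ hq0.le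
    have : (0:ℝ) ≤ (k:ℝ) := by exact_mod_cast hk0
    linarith
  have hyx : y ≤ x := by
    rw [hy, div_le_iff₀ hq0]
    nlinarith
  have hymem : y ∈ Set.Icc (0:ℝ) 1 := ⟨hy0, le_trans hyx hx1⟩
  refine ⟨y, ⟨hymem, n+1, Nat.le_add_left 1 n, ?_⟩, ?_⟩
  · exact (hchar (n+1) (Nat.le_add_left 1 n) y hymem).2 ⟨k, Or.inr rfl⟩
  · rw [Real.dist_eq, abs_of_nonneg (by linarith)]
    have : x - y < 2/q := by
      rw [hy]
      rw [sub_lt_iff_lt_add, ← add_div, lt_div_iff₀ hq0]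
      nlinarith
    linarith
end

section
/- For the tent map F and any nonempty open interval S⊆[0,1], there exists n such that F^n(S)=[0,1]; consequently every nonempty open interval contains a periodic point, i.e., the tent map is topologically transitive with dense periodic points. -/
lemma tent_eq_min (x : ℝ) : tent x = min (2*x) (2-2*x) := by
  unfold tent
  split_ifs with h
  · rw [min_eq_left (by linarith)]
  · rw [min_eq_right (by push_neg at h; linarith)]

lemma tent_continuous : Continuous tent := by
  have : tent = fun x => min (2*x) (2-2*x) := funext tent_eq_min
  rw [this]
  continuity

lemma tent_mem {x : ℝ} (hx : x ∈ Set.Icc (0:ℝ) 1) : tent x ∈ Set.Icc (0:ℝ) 1 := by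
  rw [tent_eq_min]
  obtain ⟨h0, h1⟩ := hx
  constructor
  · rcases le_total x (1/2) with h | h
    · rw [min_eq_left (by linarith)]; linarith
    · rw [min_eq_right (by linarith)]; linarith
  · rcases le_total x (1/2) with h | h
    · rw [min_eq_left (by linarith)]; linarith
    · rw [min_eq_right (by linarith)]; linarith

lemma tent_iter_mem (n : ℕ) {x : ℝ} (hx : x ∈ Set.Icc (0:ℝ) 1) :
    tent^[n] x ∈ Set.Icc (0:ℝ) 1 := by
  induction n generalizing x with
  | zero => simpa using hx
  | succ n ih =>
    rw [Function.iterate_succ_apply]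
    exact ih (tent_mem hx)

lemma tent_key : ∀ n : ℕ, ∀ k : ℕ, k < 2^n → ∀ y ∈ Set.Icc (0:ℝ) 1,
    ∃ x ∈ Set.Icc ((k:ℝ)/2^n) (((k:ℝ)+1)/2^n), tent^[n] x = y := by
  intro n
  induction n with
  | zero =>
    intro k hk y hy
    interval_cases k
    exact ⟨y, by simpa using hy, rfl⟩
  | succ n ih =>
    intro k hk y hy
    have hp : (0:ℝ) < 2^n := by positivity
    rcases lt_or_ge k (2^n) with h | h
    · obtain ⟨x', hx', hfx⟩ := ih k h y hy
      have hx1 : x' ≤ 1 := by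
        refine hx'.2.trans ?_
        rw [div_le_one hp]
        have : (k:ℝ) + 1 ≤ 2^n := by exact_mod_cast h
        linarith
      have e1 : (k:ℝ)/2^(n+1) = ((k:ℝ)/2^n)/2 := by rw [div_div, ← pow_succ]
      have e2 : ((k:ℝ)+1)/2^(n+1) = (((k:ℝ)+1)/2^n)/2 := by rw [div_div, ← pow_succ]
      refine ⟨x'/2, ⟨?_, ?_⟩, ?_⟩
      · rw [e1]; linarith [hx'.1]
      · rw [e2]; linarith [hx'.2]
      · rw [Function.iterate_succ_apply]
        have ht : tent (x'/2) = x' := by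
          unfold tent
          rw [if_pos (by linarith)]
          ring
        rw [ht, hfx]
    · set k' : ℕ := 2^(n+1) - 1 - k with hk'def
      have h2n : 2^(n+1) = 2 * 2^n := by ring
      have hk' : k' < 2^n := by omega
      have hcast : (k':ℝ) + (k:ℝ) + 1 = 2^(n+1) := by
        have : k' + k + 1 = 2^(n+1) := by omega
        exact_mod_cast this
      obtain ⟨x', hx', hfx⟩ := ih k' hk' y hy
      have hx1 : x' ≤ 1 := by
        refine hx'.2.trans ?_
        rw [div_le_one hp]
        have : (k':ℝ) + 1 ≤ 2^n := by exact_mod_cast hk'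
        linarith
      refine ⟨1 - x'/2, ⟨?_, ?_⟩, ?_⟩
      · have d1 : ((k:ℝ))/2^(n+1) = 1 - (((k':ℝ)+1)/2^n)/2 := by
          rw [pow_succ]
          field_simp
          nlinarith [hcast, pow_succ (2:ℝ) n]
        rw [d1]
        linarith [hx'.2]
      · have d2 : ((k:ℝ)+1)/2^(n+1) = 1 - (((k':ℝ))/2^n)/2 := by
          rw [pow_succ]
          field_simp
          nlinarith [hcast, pow_succ (2:ℝ) n]
        rw [d2]
        linarith [hx'.1]
      · rw [Function.iterate_succ_apply]
        have ht : tent (1 - x'/2) = x' := by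
          rw [tent_eq_min, min_eq_right (by linarith)]
          ring
        rw [ht, hfx]

theorem tent_transitive_dense_periodic (a b : ℝ) (hab : a < b)
    (hsub : Set.Ioo a b ⊆ Set.Icc (0:ℝ) 1) :
    (∃ n : ℕ, tent^[n] '' Set.Ioo a b = Set.Icc (0:ℝ) 1) ∧
    (∃ x ∈ Set.Ioo a b, ∃ p : ℕ, 1 ≤ p ∧ tent^[p] x = x) := by
  -- a ≥ 0 and b ≤ 1
  have ha : 0 ≤ a := by
    by_contra hc
    push_neg at hc
    have hlt : a < min b 0 := lt_min hab hc
    have hx : (a + min b 0)/2 ∈ Set.Ioo a b := by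
      constructor
      · linarith
      · have : min b 0 ≤ b := min_le_left _ _
        linarith
    have := (hsub hx).1
    have : min b 0 ≤ 0 := min_le_right _ _
    linarith [(hsub hx).1]
  have hb : b ≤ 1 := by
    by_contra hc
    push_neg at hc
    have hlt : max a 1 < b := max_lt hab hc
    have hx : (max a 1 + b)/2 ∈ Set.Ioo a b := by
      constructor
      · have : a ≤ max a 1 := le_max_left _ _
        linarith
      · linarith
    have h1 : (1:ℝ) ≤ max a 1 := le_max_right _ _
    linarith [(hsub hx).2]
  -- choose m large
  obtain ⟨n0, hn0⟩ := pow_unbounded_of_one_lt (2/(b-a)) (one_lt_two (α := ℝ))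
  set m : ℕ := n0 + 1 with hm_def
  have hm1 : 1 ≤ m := Nat.le_add_left 1 n0
  have hmono : (2:ℝ)^n0 ≤ 2^m := by
    apply pow_le_pow_right₀ (by norm_num)
    omega
  have hm : 2/(b-a) < 2^m := lt_of_lt_of_le hn0 hmono
  have hpm : (0:ℝ) < 2^m := by positivity
  have hba : (0:ℝ) < b - a := by linarith
  have h2m : 2/(2:ℝ)^m < b - a := by
    rw [div_lt_iff₀ hpm]
    rw [div_lt_iff₀ hba] at hm
    linarith
  -- choose dyadic interval inside (a,b)
  set k : ℕ := ⌊a * 2^m⌋₊ + 1 with hk_def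
  have hfl : (⌊a * 2^m⌋₊ : ℝ) ≤ a * 2^m := Nat.floor_le (by positivity)
  have hfl2 : a * 2^m < (⌊a * 2^m⌋₊ : ℝ) + 1 := Nat.lt_floor_add_one _
  have hk1 : a < (k:ℝ)/2^m := by
    rw [lt_div_iff₀ hpm, hk_def]
    push_cast
    linarith
  have h2m' : (2:ℝ) < (b-a)*2^m := (div_lt_iff₀ hpm).mp h2m
  have hexp : (b-a)*(2:ℝ)^m = b*2^m - a*2^m := by ring
  have hk2 : ((k:ℝ)+1)/2^m < b := by
    rw [div_lt_iff₀ hpm, hk_def]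
    push_cast
    linarith
  have hk3 : k < 2^m := by
    have h1 : ((k:ℝ)+1)/2^m < 1 := lt_of_lt_of_le hk2 hb
    rw [div_lt_one hpm] at h1
    have h2 : ((k+1:ℕ):ℝ) < ((2^m:ℕ):ℝ) := by push_cast; push_cast at h1; linarith
    have := Nat.cast_lt.mp h2
    omega
  have hdsub : Set.Icc ((k:ℝ)/2^m) (((k:ℝ)+1)/2^m) ⊆ Set.Ioo a b :=
    fun x hx => ⟨lt_of_lt_of_le hk1 hx.1, lt_of_le_of_lt hx.2 hk2⟩
  constructor
  · refine ⟨m, Set.Subset.antisymm ?_ ?_⟩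
    · rintro y ⟨x, hx, rfl⟩
      exact tent_iter_mem m (hsub hx)
    · intro y hy
      obtain ⟨x, hx, hfx⟩ := tent_key m k hk3 y hy
      exact ⟨x, hdsub hx, hfx⟩
  · obtain ⟨x1, hx1, hf1⟩ := tent_key m k hk3 0 ⟨le_refl 0, zero_le_one⟩
    obtain ⟨x2, hx2, hf2⟩ := tent_key m k hk3 1 ⟨zero_le_one, le_refl 1⟩
    set g : ℝ → ℝ := fun x => tent^[m] x - x with hg_def
    have hgc : Continuous g := (tent_continuous.iterate m).sub continuous_id
    have hicc : Set.Icc ((k:ℝ)/2^m) (((k:ℝ)+1)/2^m) ⊆ Set.Icc (0:ℝ) 1 :=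
      fun x hx => hsub (hdsub hx)
    have hx1m : x1 ∈ Set.Icc (0:ℝ) 1 := hicc hx1
    have hx2m : x2 ∈ Set.Icc (0:ℝ) 1 := hicc hx2
    have hg1 : g x1 ≤ 0 := by simp only [hg_def, hf1]; linarith [hx1m.1]
    have hg2 : 0 ≤ g x2 := by simp only [hg_def, hf2]; linarith [hx2m.2]
    have h0mem : (0:ℝ) ∈ Set.uIcc (g x1) (g x2) := Set.mem_uIcc.mpr (Or.inl ⟨hg1, hg2⟩)
    obtain ⟨x, hxu, hgx⟩ := intermediate_value_uIcc (hgc.continuousOn) h0mem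
    have hxd : x ∈ Set.Icc ((k:ℝ)/2^m) (((k:ℝ)+1)/2^m) := by
      exact Set.uIcc_subset_Icc hx1 hx2 hxu
    refine ⟨x, hdsub hxd, m, hm1, ?_⟩
    have : tent^[m] x - x = 0 := hgx
    linarith
end
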